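/- arXiv:1206.0992 — 2 statements merged into one kernel-verified Lean document; each statement's English description precedes it below -/
import Mathlib

section
/- Let n = 2^m with m ≥ 1 an integer. There exist indices i_0 ≠ j_0, …, i_{mn/2−1} ≠ j_{mn/2−1} in {1,…,n} such that the matrices P_k = M_{i_k j_k} ∈ 𝓜_n, k = 0,…,mn/2−1, satisfy P_{mn/2−1}⋯P_0 = (1/n)·1·1^T, where 1 is the all-ones column vector; that is, finite-time consensus is reached in exactly m·2^{m−1} gossip steps, i.e., m·n node updates. -/
open Matrix

/-- The symmetric gossip matrix `M_{ij} = I - (e_i - e_j)(e_i - e_j)^T / 2`. -/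
noncomputable def gossipM (n : ℕ) (i j : Fin n) : Matrix (Fin n) (Fin n) ℝ :=
  1 - (1 / 2 : ℝ) • vecMulVec (Pi.single i 1 - Pi.single j 1) (Pi.single i 1 - Pi.single j 1)

/-- Gossip matrix over an arbitrary index type. -/
noncomputable def Gm {α : Type*} [DecidableEq α] (i j : α) : Matrix α α ℝ :=
  1 - (1 / 2 : ℝ) • vecMulVec (Pi.single i 1 - Pi.single j 1) (Pi.single i 1 - Pi.single j 1)

/-- The consensus matrix. -/
noncomputable def Jm (α : Type*) [Fintype α] : Matrix α α ℝ :=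
  Matrix.of fun _ _ => ((Fintype.card α : ℝ))⁻¹

/-- `Good α N` : there is a sequence of `N` gossip steps achieving consensus on `α`. -/
def Good (α : Type*) [Fintype α] [DecidableEq α] (N : ℕ) : Prop :=
  ∃ L : List (α × α), L.length = N ∧ (∀ p ∈ L, p.1 ≠ p.2) ∧
    ((L.map fun p => Gm p.1 p.2).reverse.prod = Jm α)

theorem hom_reverse_prod {M N : Type*} [Monoid M] [Monoid N] (φ : M →* N) (l : List M) :
    (l.map φ).reverse.prod = φ l.reverse.prod := by
  rw [← List.map_reverse]
  exact (map_list_prod φ _).symm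

section Transport

variable {α β : Type*} [Fintype α] [DecidableEq α] [Fintype β] [DecidableEq β]

theorem reindex_Gm (e : α ≃ β) (i j : α) :
    (Matrix.reindexAlgEquiv ℝ ℝ e) (Gm i j) = Gm (e i) (e j) := by
  ext a b
  simp [Gm, Matrix.reindexAlgEquiv_apply, Matrix.reindex_apply, Matrix.submatrix_apply,
    Matrix.one_apply, Pi.single_apply, Equiv.symm_apply_eq, Matrix.sub_apply,
    vecMulVec_apply]

theorem reindex_Jm (e : α ≃ β) :
    (Matrix.reindexAlgEquiv ℝ ℝ e) (Jm α) = Jm β := by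
  ext a b
  simp [Jm, Matrix.reindexAlgEquiv_apply, Matrix.reindex_apply, Matrix.submatrix_apply,
    Fintype.card_congr e]

theorem Good.transport (e : α ≃ β) {N : ℕ} (h : Good α N) : Good β N := by
  obtain ⟨L, hlen, hne, hprod⟩ := h
  refine ⟨L.map (Prod.map e e), by simp [hlen], ?_, ?_⟩
  · intro p hp
    simp only [List.mem_map] at hp
    obtain ⟨q, hq, rfl⟩ := hp
    simpa using fun h => hne q hq (e.injective h)
  · have h1 : ((L.map (Prod.map e e)).map fun p => Gm p.1 p.2)
        = (L.map fun p => Gm p.1 p.2).map (Matrix.reindexAlgEquiv ℝ ℝ e) := by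
      simp only [List.map_map]
      refine List.map_congr_left fun p _ => ?_
      exact (reindex_Gm e p.1 p.2).symm
    rw [h1, ← List.map_reverse, ← map_list_prod (Matrix.reindexAlgEquiv ℝ ℝ e),
      hprod, reindex_Jm]

end Transport

section Step

variable {α : Type*} [Fintype α] [DecidableEq α]

/-- Embedding a matrix as the top-left block. -/
noncomputable def blockL (α : Type*) [Fintype α] [DecidableEq α] :
    Matrix α α ℝ →* Matrix (α ⊕ α) (α ⊕ α) ℝ where
  toFun A := Matrix.fromBlocks A 0 0 1
  map_one' := Matrix.fromBlocks_one
  map_mul' A B := by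
    rw [Matrix.fromBlocks_multiply]
    simp

/-- Embedding a matrix as the bottom-right block. -/
noncomputable def blockR (α : Type*) [Fintype α] [DecidableEq α] :
    Matrix α α ℝ →* Matrix (α ⊕ α) (α ⊕ α) ℝ where
  toFun A := Matrix.fromBlocks 1 0 0 A
  map_one' := Matrix.fromBlocks_one
  map_mul' A B := by
    rw [Matrix.fromBlocks_multiply]
    simp

theorem Gm_inl_inl (i j : α) :
    Gm (Sum.inl i : α ⊕ α) (Sum.inl j) = blockL α (Gm i j) := by
  ext (a | a) (b | b) <;>
    simp [Gm, blockL, Matrix.fromBlocks, Matrix.one_apply, Pi.single_apply, Matrix.sub_apply,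
      vecMulVec_apply]

theorem Gm_inr_inr (i j : α) :
    Gm (Sum.inr i : α ⊕ α) (Sum.inr j) = blockR α (Gm i j) := by
  ext (a | a) (b | b) <;>
    simp [Gm, blockR, Matrix.fromBlocks, Matrix.one_apply, Pi.single_apply, Matrix.sub_apply,
      vecMulVec_apply]

/-- The half-diagonal matrix for a set of indices. -/
noncomputable def XS (S : List α) : Matrix α α ℝ :=
  Matrix.diagonal fun x => if x ∈ S then (1 / 2 : ℝ) else 0

theorem Gm_mix (a : α) :
    Gm (Sum.inl a : α ⊕ α) (Sum.inr a)
      = Matrix.fromBlocks (1 - XS [a]) (XS [a]) (XS [a]) (1 - XS [a]) := by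
  ext (x | x) (y | y) <;>
    simp [Gm, XS, Matrix.fromBlocks, Matrix.one_apply, Pi.single_apply, Matrix.sub_apply,
      vecMulVec_apply, Matrix.diagonal_apply] <;>
    split_ifs <;> simp_all <;> norm_num

theorem XS_mul_XS {a : α} {S : List α} (ha : a ∉ S) : XS [a] * XS S = 0 := by
  rw [XS, XS, Matrix.diagonal_mul_diagonal]
  have h : (fun x => (if x ∈ [a] then (1 / 2 : ℝ) else 0) * (if x ∈ S then (1 / 2 : ℝ) else 0))
      = fun _ => (0 : ℝ) := by
    funext x
    by_cases hx : x = a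
    · subst hx; simp [ha]
    · simp [List.mem_singleton, hx]
  rw [h, Matrix.diagonal_zero]

theorem XS_mul_XS' {a : α} {S : List α} (ha : a ∉ S) : XS S * XS [a] = 0 := by
  rw [XS, XS, Matrix.diagonal_mul_diagonal]
  have h : (fun x => (if x ∈ S then (1 / 2 : ℝ) else 0) * (if x ∈ [a] then (1 / 2 : ℝ) else 0))
      = fun _ => (0 : ℝ) := by
    funext x
    by_cases hx : x = a
    · subst hx; simp [ha]
    · simp [List.mem_singleton, hx]
  rw [h, Matrix.diagonal_zero]

theorem XS_cons {a : α} {S : List α} (ha : a ∉ S) : XS (a :: S) = XS [a] + XS S := by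
  have h : (fun x => if x ∈ a :: S then (1 / 2 : ℝ) else 0)
      = fun x => (if x ∈ [a] then (1 / 2 : ℝ) else 0) + (if x ∈ S then (1 / 2 : ℝ) else 0) := by
    funext x
    by_cases hx : x = a
    · subst hx; simp [ha]
    · simp [List.mem_cons, List.mem_singleton, hx]
  rw [XS, XS, XS, h, ← Matrix.diagonal_add]

theorem mix_prod (S : List α) (hS : S.Nodup) :
    ((S.map fun a => Gm (Sum.inl a : α ⊕ α) (Sum.inr a)).prod)
      = Matrix.fromBlocks (1 - XS S) (XS S) (XS S) (1 - XS S) := by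
  induction S with
  | nil => simp [XS, Matrix.fromBlocks_one]
  | cons a S ih =>
    have ha : a ∉ S := (List.nodup_cons.mp hS).1
    have h1 := XS_mul_XS ha
    have h2 := XS_mul_XS' ha
    rw [List.map_cons, List.prod_cons, ih (List.nodup_cons.mp hS).2, Gm_mix,
      Matrix.fromBlocks_multiply, XS_cons ha]
    congr 1 <;>
      simp only [sub_mul, mul_sub, one_mul, mul_one, h1, h2, sub_zero, add_zero, zero_add,
        mul_zero, zero_mul] <;>
      abel

theorem XS_univ_reverse :
    XS ((Finset.univ.toList : List α).reverse) = (1 / 2 : ℝ) • (1 : Matrix α α ℝ) := by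
  rw [XS]
  ext x y
  by_cases h : x = y <;> simp [Matrix.diagonal_apply, Matrix.one_apply, h]

theorem half_one : (1 : Matrix α α ℝ) - (1 / 2 : ℝ) • (1 : Matrix α α ℝ)
    = (1 / 2 : ℝ) • (1 : Matrix α α ℝ) := by
  have h : ((1 : ℝ) - 1 / 2) • (1 : Matrix α α ℝ) = 1 - (1 / 2 : ℝ) • (1 : Matrix α α ℝ) := by
    rw [sub_smul, one_smul]
  rw [← h]
  norm_num

theorem Good.step {N : ℕ} (h : Good α N) : Good (α ⊕ α) (N + N + Fintype.card α) := by
  obtain ⟨L, hlen, hne, hprod⟩ := h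
  refine ⟨(L.map fun p => (Sum.inl p.1, Sum.inl p.2))
      ++ (L.map fun p => (Sum.inr p.1, Sum.inr p.2))
      ++ (Finset.univ.toList.map fun a => (Sum.inl a, Sum.inr a)), ?_, ?_, ?_⟩
  · simp [hlen]; ring
  · intro p hp
    simp only [List.mem_append, List.mem_map] at hp
    rcases hp with (⟨q, hq, rfl⟩ | ⟨q, hq, rfl⟩) | ⟨a, _, rfl⟩
    · simpa using hne q hq
    · simpa using hne q hq
    · simp
  · rw [List.map_append, List.map_append, List.reverse_append, List.reverse_append,
      List.prod_append, List.prod_append]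
    have hL : ((L.map fun p => (Sum.inl p.1, Sum.inl p.2)).map
        fun p : (α ⊕ α) × (α ⊕ α) => Gm p.1 p.2).reverse.prod = blockL α (Jm α) := by
      rw [List.map_map,
        show ((fun p : (α ⊕ α) × (α ⊕ α) => Gm p.1 p.2)
            ∘ fun p : α × α => ((Sum.inl p.1 : α ⊕ α), (Sum.inl p.2 : α ⊕ α)))
          = (blockL α) ∘ (fun p : α × α => Gm p.1 p.2) from
          funext fun p => Gm_inl_inl p.1 p.2,
        ← List.map_map, hom_reverse_prod, hprod]
    have hR : ((L.map fun p => (Sum.inr p.1, Sum.inr p.2)).map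
        fun p : (α ⊕ α) × (α ⊕ α) => Gm p.1 p.2).reverse.prod = blockR α (Jm α) := by
      rw [List.map_map,
        show ((fun p : (α ⊕ α) × (α ⊕ α) => Gm p.1 p.2)
            ∘ fun p : α × α => ((Sum.inr p.1 : α ⊕ α), (Sum.inr p.2 : α ⊕ α)))
          = (blockR α) ∘ (fun p : α × α => Gm p.1 p.2) from
          funext fun p => Gm_inr_inr p.1 p.2,
        ← List.map_map, hom_reverse_prod, hprod]
    have hM : ((Finset.univ.toList.map fun a => ((Sum.inl a : α ⊕ α), (Sum.inr a : α ⊕ α))).map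
        fun p : (α ⊕ α) × (α ⊕ α) => Gm p.1 p.2).reverse.prod
        = Matrix.fromBlocks ((1/2 : ℝ) • 1) ((1/2 : ℝ) • 1) ((1/2 : ℝ) • 1) ((1/2 : ℝ) • 1) := by
      rw [List.map_map, ← List.map_reverse]
      have hmp := mix_prod (α := α) (Finset.univ.toList.reverse)
        (List.nodup_reverse.mpr (Finset.nodup_toList _))
      rw [show ((fun p : (α ⊕ α) × (α ⊕ α) => Gm p.1 p.2) ∘ fun a => (Sum.inl a, Sum.inr a))
          = fun a : α => Gm (Sum.inl a) (Sum.inr a) from rfl, hmp, XS_univ_reverse, half_one]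
    rw [hL, hR, hM]
    simp only [blockL, blockR, MonoidHom.coe_mk, OneHom.coe_mk]
    rw [Matrix.fromBlocks_multiply, Matrix.fromBlocks_multiply]
    ext (x | x) (y | y) <;>
      simp [Jm, Matrix.smul_apply, Matrix.mul_apply, Finset.sum_ite_eq, Matrix.one_apply,
        Fintype.card_sum, Matrix.fromBlocks] <;> ring

end Step

theorem good_two : Good (Fin 2) 1 := by
  refine ⟨[(0, 1)], rfl, by simp, ?_⟩
  simp only [List.map_cons, List.map_nil, List.reverse_cons, List.reverse_nil,
    List.nil_append, List.prod_cons, List.prod_nil, mul_one]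
  ext i j
  fin_cases i <;> fin_cases j <;>
    simp [Gm, Jm, Matrix.one_apply, Pi.single_apply, vecMulVec_apply] <;> norm_num

theorem good_pow (k : ℕ) : Good (Fin (2 ^ (k + 1))) ((k + 1) * 2 ^ k) := by
  induction k with
  | zero => simpa using good_two
  | succ k ih =>
    have h := ih.step
    have e : (Fin (2 ^ (k + 1)) ⊕ Fin (2 ^ (k + 1))) ≃ Fin (2 ^ (k + 2)) :=
      finSumFinEquiv.trans (finCongr (by ring))
    have h2 := h.transport e
    have harith : (k + 1) * 2 ^ k + (k + 1) * 2 ^ k + Fintype.card (Fin (2 ^ (k + 1)))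
        = (k + 2) * 2 ^ (k + 1) := by
      simp [Fintype.card_fin]; ring
    rwa [harith] at h2

theorem ofFn_get_eq {β γ : Type*} (L : List β) (f : β → γ) {N : ℕ} (h : L.length = N) :
    List.ofFn (fun k : Fin N => f (L.get (Fin.cast h.symm k))) = L.map f := by
  subst h
  simp only [Fin.cast_refl, id]
  rw [show (fun k : Fin L.length => f (L.get k)) = f ∘ L.get from rfl, ← List.map_ofFn,
    List.ofFn_get]

theorem stmt_3 (m n : ℕ) (hm : 1 ≤ m) (hn : n = 2 ^ m) :
    ∃ i j : Fin (m * 2 ^ (m - 1)) → Fin n,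
      (∀ k, i k ≠ j k) ∧
      (List.ofFn (fun k => gossipM n (i k) (j k))).reverse.prod
        = Matrix.of fun _ _ => (1 / (n : ℝ)) := by
  obtain ⟨k, rfl⟩ : ∃ k, m = k + 1 := ⟨m - 1, (Nat.succ_pred_eq_of_pos hm).symm⟩
  subst hn
  obtain ⟨L, hlen, hne, hprod⟩ := good_pow k
  have hlen' : L.length = (k + 1) * 2 ^ (k + 1 - 1) := by simpa using hlen
  refine ⟨fun idx => (L.get (Fin.cast hlen'.symm idx)).1,
    fun idx => (L.get (Fin.cast hlen'.symm idx)).2, ?_, ?_⟩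
  · intro idx
    exact hne _ (L.get_mem _)
  · have hg : ∀ (i j : Fin (2 ^ (k + 1))), gossipM (2 ^ (k + 1)) i j = Gm i j := fun _ _ => rfl
    have key := ofFn_get_eq L (fun p : Fin (2 ^ (k+1)) × Fin (2 ^ (k+1)) => Gm p.1 p.2) hlen'
    calc (List.ofFn fun idx => gossipM (2 ^ (k + 1)) (L.get (Fin.cast hlen'.symm idx)).1
            (L.get (Fin.cast hlen'.symm idx)).2).reverse.prod
        = (List.ofFn fun idx : Fin ((k+1) * 2 ^ (k + 1 - 1)) =>
            (fun p : Fin (2^(k+1)) × Fin (2^(k+1)) => Gm p.1 p.2)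
              (L.get (Fin.cast hlen'.symm idx))).reverse.prod := by
          simp only [hg]
      _ = (L.map fun p => Gm p.1 p.2).reverse.prod := by rw [key]
      _ = Jm (Fin (2 ^ (k + 1))) := hprod
      _ = Matrix.of fun _ _ => (1 / ((2 ^ (k + 1) : ℕ) : ℝ)) := by
          ext; simp [Jm, one_div]
end

section
/- For every integer n ≥ 1 there exist an integer t ≥ 1 and matrices P_0, …, P_{t−1} ∈ 𝓜_n^♮ such that rank(P_{t−1}⋯P_0) = 1; that is, an asymmetric gossip algorithm with global finite-time convergence always exists, regardless of the number of nodes. -/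
open Matrix

/-- The asymmetric gossip matrix `I - e_i (e_i - e_j)^T / 2`. -/
noncomputable def gossipA (n : ℕ) (i j : Fin n) : Matrix (Fin n) (Fin n) ℝ :=
  1 - (1 / 2 : ℝ) • vecMulVec (Pi.single i 1) (Pi.single i 1 - Pi.single j 1)

/-- Membership in the set `𝓜_n^♮` of (symmetric or asymmetric) gossip matrices. -/
def memAsym (n : ℕ) (P : Matrix (Fin n) (Fin n) ℝ) : Prop :=
  ∃ i j, P = gossipM n i j ∨ P = gossipA n i j

lemma vmv_mul {n : ℕ} (u v : Fin n → ℝ) (Q : Matrix (Fin n) (Fin n) ℝ) :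
    vecMulVec u v * Q = vecMulVec u (v ᵥ* Q) := by
  ext r s
  simp [mul_apply, vecMulVec_apply, vecMul, dotProduct, Finset.mul_sum, mul_assoc]

lemma row_A {n : ℕ} (i j : Fin n) (Q : Matrix (Fin n) (Fin n) ℝ) (r : Fin n) :
    (gossipA n i j * Q) r = if r = i then (1/2 : ℝ) • (Q i + Q j) else Q r := by
  have h : gossipA n i j * Q
      = Q - (1/2 : ℝ) • vecMulVec (Pi.single i 1) (Q i - Q j) := by
    rw [gossipA, sub_mul, one_mul, Matrix.smul_mul, vmv_mul, sub_vecMul,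
      single_one_vecMul, single_one_vecMul]
    rfl
  funext s
  rw [h]
  by_cases hr : r = i <;>
    simp [hr, vecMulVec_apply, Pi.single_apply] <;> ring

lemma row_M {n : ℕ} (i j : Fin n) (Q : Matrix (Fin n) (Fin n) ℝ) (r : Fin n) :
    (gossipM n i j * Q) r = if r = i ∨ r = j then (1/2 : ℝ) • (Q i + Q j) else Q r := by
  have h : gossipM n i j * Q
      = Q - (1/2 : ℝ) • vecMulVec (Pi.single i 1 - Pi.single j 1) (Q i - Q j) := by
    rw [gossipM, sub_mul, one_mul, Matrix.smul_mul, vmv_mul, sub_vecMul,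
      single_one_vecMul, single_one_vecMul]
    rfl
  funext s
  rw [h]
  by_cases hri : r = i <;> by_cases hrj : r = j
  · subst hri; simp [← hrj, vecMulVec_apply, Pi.single_apply]; ring
  · subst hri; simp [vecMulVec_apply, Pi.single_apply, Ne.symm hrj, hrj]; ring
  · subst hrj; simp [vecMulVec_apply, Pi.single_apply, Ne.symm hri, hri]; ring
  · simp [vecMulVec_apply, Pi.single_apply, hri, hrj, Ne.symm hri, Ne.symm hrj]


lemma rank_consensus {n : ℕ} (hn : 1 ≤ n) (M : Matrix (Fin n) (Fin n) ℝ)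
    (w : Fin n → ℝ) (hsum : ∑ j, w j = 1) (hrows : ∀ i, M i = w) :
    M.rank = 1 := by
  have hM : M = vecMulVec (fun _ => (1 : ℝ)) w := by
    ext i j
    simp [vecMulVec_apply, congrFun (hrows i) j]
  have h1 : M.rank ≤ 1 := by
    rw [hM, vecMulVec_eq (Fin 1)]
    exact (rank_mul_le_left _ _).trans ((rank_le_card_width _).trans (by simp))
  have hmv : M *ᵥ (fun _ => (1 : ℝ)) = fun _ => (1 : ℝ) := by
    funext i
    simp [mulVec, dotProduct, congrFun (hrows i), hsum]
  have hmem : (fun _ => (1 : ℝ)) ∈ LinearMap.range M.mulVecLin :=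
    ⟨fun _ => (1 : ℝ), by simpa [mulVecLin_apply] using hmv⟩
  have hne : ((⟨fun _ => (1 : ℝ), hmem⟩ : LinearMap.range M.mulVecLin)) ≠ 0 := by
    intro h
    have := congrFun (congrArg Subtype.val h) ⟨0, hn⟩
    simpa using this
  have h2 : 0 < M.rank := by
    rw [Matrix.rank]
    exact Module.finrank_pos_iff_exists_ne_zero.mpr ⟨_, hne⟩
  omega


lemma gossipM_self {n : ℕ} (i : Fin n) : gossipM n i i = 1 := by
  ext a b
  simp [gossipM, vecMulVec_apply]

lemma one_row {n : ℕ} (i : Fin n) :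
    (1 : Matrix (Fin n) (Fin n) ℝ) i = Pi.single i 1 := by
  funext j
  simp [one_apply, Pi.single_apply, eq_comm]

lemma loop_rows {n : ℕ} (K : Fin n) (Q : Matrix (Fin n) (Fin n) ℝ) :
    ∀ m : ℕ, m ≤ (K : ℕ) →
    ∃ L2 : List (Matrix (Fin n) (Fin n) ℝ), (∀ P ∈ L2, memAsym n P) ∧
      ∀ r : Fin n, (L2.prod * Q) r
        = if (r : ℕ) < m then (1/2 : ℝ) • (Q r + Q K) else Q r := by
  intro m
  induction m with
  | zero =>
    intro _
    exact ⟨[], by simp, by simp⟩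
  | succ m ih =>
    intro hm
    obtain ⟨L2, hmem, hrow⟩ := ih (Nat.le_of_succ_le hm)
    have hmn : m < n := lt_of_lt_of_le (lt_of_lt_of_le (Nat.lt_succ_self m) hm) K.isLt.le
    refine ⟨gossipA n ⟨m, hmn⟩ K :: L2, ?_, ?_⟩
    · intro P hP
      rcases List.mem_cons.mp hP with h | h
      · exact ⟨⟨m, hmn⟩, K, Or.inr h⟩
      · exact hmem P h
    · intro r
      have hexp : (gossipA n ⟨m, hmn⟩ K :: L2).prod * Q
          = gossipA n ⟨m, hmn⟩ K * (L2.prod * Q) := by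
        rw [List.prod_cons, mul_assoc]
      rw [hexp, row_A]
      by_cases hr : r = ⟨m, hmn⟩
      · have h1 : (L2.prod * Q) ⟨m, hmn⟩ = Q ⟨m, hmn⟩ := by
          rw [hrow]; simp
        have h2 : (L2.prod * Q) K = Q K := by
          rw [hrow]; simp; omega
        subst hr
        simp [h1, h2]
      · have hrm : (r : ℕ) ≠ m := fun h => hr (Fin.ext h)
        rw [if_neg hr, hrow]
        by_cases h3 : (r : ℕ) < m
        · rw [if_pos h3, if_pos (by omega)]
        · rw [if_neg h3, if_neg (by omega)]

lemma key (n : ℕ) (hn : 1 ≤ n) :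
    ∀ k : ℕ, 1 ≤ k → k ≤ n →
    ∃ L : List (Matrix (Fin n) (Fin n) ℝ), L ≠ [] ∧ (∀ P ∈ L, memAsym n P) ∧
      ∃ w : Fin n → ℝ, (∑ j, w j = 1) ∧
        ∀ i : Fin n, L.prod i = if (i : ℕ) < k then w else Pi.single i 1 := by
  intro k hk
  induction k, hk using Nat.le_induction with
  | base =>
    intro _
    refine ⟨[gossipM n ⟨0, hn⟩ ⟨0, hn⟩], by simp, ?_, Pi.single ⟨0, hn⟩ 1, by simp, ?_⟩
    · intro P hP
      rw [List.mem_singleton] at hP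
      exact ⟨⟨0, hn⟩, ⟨0, hn⟩, Or.inl hP⟩
    · intro i
      rw [List.prod_singleton, gossipM_self, one_row]
      by_cases h : (i : ℕ) < 1
      · have : i = ⟨0, hn⟩ := Fin.ext (by simp only [Fin.val_mk]; omega)
        rw [if_pos h, this]
      · rw [if_neg h]
  | succ k hk ih =>
    intro hk1
    obtain ⟨L, hne, hmem, w, hsum, hrow⟩ := ih (by omega)
    obtain ⟨K, hKv⟩ : ∃ K : Fin n, (K : ℕ) = k := ⟨⟨k, by omega⟩, rfl⟩
    obtain ⟨Z, hZv⟩ : ∃ Z : Fin n, (Z : ℕ) = 0 := ⟨⟨0, by omega⟩, rfl⟩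
    obtain ⟨Km, hKmv⟩ : ∃ K' : Fin n, (K' : ℕ) = k - 1 := ⟨⟨k - 1, by omega⟩, rfl⟩
    have hQK : L.prod K = Pi.single K 1 := by rw [hrow, if_neg (by omega)]
    have hQZ : L.prod Z = w := by rw [hrow, if_pos (by omega)]
    have hQ1 : ∀ r, (gossipA n K Z * L.prod) r
        = if r = K then (1/2 : ℝ) • (Pi.single K 1 + w) else L.prod r := by
      intro r
      rw [row_A, hQK, hQZ]
    have hQ1K : (gossipA n K Z * L.prod) K = (1/2 : ℝ) • (Pi.single K 1 + w) := by
      rw [hQ1, if_pos rfl]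
    obtain ⟨L2, hmem2, hrow2⟩ := loop_rows K (gossipA n K Z * L.prod) (k - 1) (by omega)
    set w' : Fin n → ℝ := fun j => (3/4 : ℝ) * w j + (1/4 : ℝ) * (Pi.single K (1 : ℝ) : Fin n → ℝ) j with hw'
    have hmerge : (1/2 : ℝ) • (w + (1/2 : ℝ) • (Pi.single K 1 + w)) = w' := by
      funext j
      simp [hw']
      ring
    have hrow3 : ∀ r : Fin n, (L2.prod * (gossipA n K Z * L.prod)) r
        = if (r : ℕ) < k - 1 then w' else (gossipA n K Z * L.prod) r := by
      intro r
      rw [hrow2]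
      by_cases h : (r : ℕ) < k - 1
      · rw [if_pos h, if_pos h, hQ1K,
          hQ1 r, if_neg (show r ≠ K by intro e; rw [e, hKv] at h; omega),
          hrow, if_pos (by omega)]
        exact hmerge
      · rw [if_neg h, if_neg h]
    have hPKm : (L2.prod * (gossipA n K Z * L.prod)) Km = w := by
      rw [hrow3, if_neg (by omega), hQ1,
        if_neg (show Km ≠ K by intro e; rw [e] at hKmv; omega),
        hrow, if_pos (by omega)]
    have hPK : (L2.prod * (gossipA n K Z * L.prod)) K
        = (1/2 : ℝ) • (Pi.single K 1 + w) := by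
      rw [hrow3, if_neg (by omega), hQ1K]
    refine ⟨gossipM n Km K :: (L2 ++ (gossipA n K Z :: L)), by simp, ?_, w', ?_, ?_⟩
    · intro P hP
      rcases List.mem_cons.mp hP with h | h
      · exact ⟨Km, K, Or.inl h⟩
      rcases List.mem_append.mp h with h | h
      · exact hmem2 P h
      rcases List.mem_cons.mp h with h | h
      · exact ⟨K, Z, Or.inr h⟩
      · exact hmem P h
    · have h1 : ∑ j, w' j
          = (3/4 : ℝ) * (∑ j, w j) + (1/4 : ℝ) * ∑ j, (Pi.single K 1 : Fin n → ℝ) j := by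
        rw [Finset.mul_sum, Finset.mul_sum, ← Finset.sum_add_distrib]
      rw [h1, hsum, Finset.sum_pi_single']
      norm_num
    · intro i
      have hexp : (gossipM n Km K :: (L2 ++ (gossipA n K Z :: L))).prod
          = gossipM n Km K * (L2.prod * (gossipA n K Z * L.prod)) := by
        rw [List.prod_cons, List.prod_append, List.prod_cons]
      rw [hexp, row_M]
      by_cases hi : i = Km ∨ i = K
      · have hval : (i : ℕ) < k + 1 := by
          rcases hi with h | h <;> rw [h] <;> omega
        rw [if_pos hi, if_pos hval, hPKm, hPK]
        exact hmerge
      · push_neg at hi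
        obtain ⟨hi1, hi2⟩ := hi
        have hv1 : (i : ℕ) ≠ k - 1 := fun h => hi1 (Fin.ext (by rw [h, hKmv]))
        have hv2 : (i : ℕ) ≠ k := fun h => hi2 (Fin.ext (by rw [h, hKv]))
        rw [if_neg (not_or.mpr ⟨hi1, hi2⟩), hrow3]
        by_cases h3 : (i : ℕ) < k - 1
        · rw [if_pos h3, if_pos (by omega)]
        · rw [if_neg h3, hQ1, if_neg hi2, hrow, if_neg (by omega), if_neg (by omega)]

theorem stmt_8 (n : ℕ) (hn : 1 ≤ n) :
    ∃ t : ℕ, 1 ≤ t ∧ ∃ P : Fin t → Matrix (Fin n) (Fin n) ℝ,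
      (∀ k, memAsym n (P k)) ∧ ((List.ofFn P).reverse.prod).rank = 1 := by
  obtain ⟨L, hne, hmem, w, hsum, hrow⟩ := key n hn n hn le_rfl
  have hrows : ∀ i : Fin n, L.prod i = w := by
    intro i
    rw [hrow, if_pos i.isLt]
  have hrank : (L.prod).rank = 1 := rank_consensus hn _ w hsum hrows
  refine ⟨L.length, List.length_pos_iff.mpr hne, fun k => L.reverse.get ⟨k, by simpa using k.isLt⟩, ?_, ?_⟩
  · intro k
    exact hmem _ (List.mem_reverse.mp (List.get_mem _ _))
  · have hofn : List.ofFn (fun k : Fin L.length => L.reverse.get ⟨k, by simpa using k.isLt⟩)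
        = L.reverse := by
      apply List.ext_getElem (by simp)
      intro i h1 h2
      simp
    rw [hofn, List.reverse_reverse]
    exact hrank
end
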